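/- Let d ≥ 1 and p > 1, and let Q : ℝ^d → (0,∞) be a continuous radially symmetric function, Q(x) = q(|x|), such that for some constants κ > 0 and C₀ > 0 one has q(r) ≤ C₀ e^{−r} for all r ≥ 0 and |q(r) − κ r^{−(d−1)/2} e^{−r}| ≤ C₀ r^{−(d+1)/2} e^{−r} for all r ≥ 1. Then there exists C > 0 such that for every z ∈ ℝ^d with |z| ≥ 2, |∫_{ℝ^d} Q(x)^p Q(x−z) dx − I·q(|z|)| ≤ C |z|^{−1} q(|z|), where I = ∫_{ℝ^d} Q(x)^p e^{−x₁} dx (x₁ being the first coordinate of x). -/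

import Mathlib

set_option maxHeartbeats 1000000
open MeasureTheory Real
open scoped RealInnerProductSpace


lemma aux_one_add_le_exp {k t : ℝ} (hk : 0 < k) (ht : 0 ≤ t) :
    1 + t ≤ (1 + 1/k) * Real.exp (k * t) := by
  have h1 : k * t + 1 ≤ Real.exp (k * t) := Real.add_one_le_exp (k * t)
  have h2 : (0:ℝ) < 1/k := by positivity
  have h3 : 1/k * k = 1 := one_div_mul_cancel hk.ne'
  have h4 : (1 + 1/k) * (k*t+1) ≤ (1 + 1/k) * Real.exp (k*t) :=
    mul_le_mul_of_nonneg_left h1 (by positivity)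
  nlinarith [mul_nonneg hk.le ht, mul_nonneg h2.le (mul_nonneg hk.le ht)]

lemma aux_rpow_mvt {a ρ : ℝ} (ha : 0 ≤ a) (hρ : 0 < ρ) {u v : ℝ}
    (hu : ρ ≤ u) (hv : ρ ≤ v) :
    |u ^ (-a) - v ^ (-a)| ≤ a * ρ ^ (-a - 1) * |u - v| := by
  have key : ∀ x ∈ Set.Ici ρ, HasDerivWithinAt (fun t : ℝ => t ^ (-a))
      (-a * x ^ (-a - 1)) (Set.Ici ρ) x := by
    intro x hx
    simp only [Set.mem_Ici] at hx
    have hx0 : (0:ℝ) < x := hρ.trans_le hx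
    exact (Real.hasDerivAt_rpow_const (Or.inl hx0.ne')).hasDerivWithinAt
  have bound : ∀ x ∈ Set.Ici ρ, ‖-a * x ^ (-a - 1)‖ ≤ a * ρ ^ (-a - 1) := by
    intro x hx
    simp only [Set.mem_Ici] at hx
    have hx0 : 0 < x := hρ.trans_le hx
    rw [norm_mul, norm_neg, Real.norm_eq_abs, Real.norm_eq_abs, abs_of_nonneg ha,
      abs_of_nonneg (Real.rpow_nonneg hx0.le _)]
    exact mul_le_mul_of_nonneg_left
      (Real.rpow_le_rpow_of_nonpos hρ hx (by linarith)) ha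
  have := (convex_Ici ρ).norm_image_sub_le_of_norm_hasDerivWithin_le key bound hv hu
  simpa [Real.norm_eq_abs, abs_sub_comm] using this

lemma aux_pow_le_exp (m : ℕ) (hm : 0 < m) {c t : ℝ} (hc : 0 < c) (ht : 0 ≤ t) :
    (1 + t) ^ m ≤ (1 + (m:ℝ)/c) ^ m * Real.exp (c * t) := by
  set k : ℝ := c / m with hk
  have hkpos : 0 < k := by positivity
  have h1 : (1 + t) ^ m ≤ ((1 + 1/k) * Real.exp (k * t)) ^ m :=
    pow_le_pow_left₀ (by positivity) (aux_one_add_le_exp hkpos ht) m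
  have h2 : ((1 + 1/k) * Real.exp (k * t)) ^ m
      = (1 + (m:ℝ)/c) ^ m * Real.exp (c * t) := by
    rw [mul_pow, ← Real.exp_nat_mul]
    congr 2
    · rw [hk]; field_simp
    · rw [hk]; field_simp
  rw [h2] at h1; exact h1

lemma aux_integrable (d : ℕ) {c : ℝ} (hc : 0 < c) (b : ℕ) :
    Integrable (fun x : EuclideanSpace ℝ (Fin d) => Real.exp (-(c * ‖x‖)) * (1 + ‖x‖) ^ b) := by
  set m : ℕ := b + d + 1 with hm
  set M : ℝ := (1 + (m:ℝ)/c) ^ m with hM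
  have hMpos : 0 < M := by positivity
  have hbase : Integrable (fun x : EuclideanSpace ℝ (Fin d) => M * (1 + ‖x‖) ^ (-((d:ℝ)+1))) := by
    refine (integrable_one_add_norm ?_).const_mul M
    simp [finrank_euclideanSpace_fin]
  refine hbase.mono' ?_ ?_
  · exact ((Real.continuous_exp.comp ((continuous_const.mul continuous_norm : Continuous fun x : EuclideanSpace ℝ (Fin d) => c * ‖x‖)).neg).mul
      ((continuous_const.add continuous_norm).pow b)).aestronglyMeasurable
  · refine Filter.Eventually.of_forall fun x => ?_
    set t := ‖x‖ with htdef
    have ht : 0 ≤ t := norm_nonneg x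
    have h1t : (0:ℝ) < 1 + t := by linarith
    have hpd : (0:ℝ) < (1 + t) ^ ((d:ℝ)+1) := Real.rpow_pos_of_pos h1t _
    rw [Real.norm_eq_abs, abs_of_nonneg (by positivity), Real.rpow_neg h1t.le,
      mul_comm M, inv_mul_eq_div, le_div_iff₀ hpd]
    have key : (1+t) ^ b * (1+t) ^ ((d:ℝ)+1) = (1+t) ^ m := by
      rw [← Real.rpow_natCast (1+t) b, ← Real.rpow_add h1t, ← Real.rpow_natCast (1+t) m]
      congr 1
      push_cast [hm]
      ring
    calc Real.exp (-(c*t)) * (1+t)^b * (1+t)^((d:ℝ)+1)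
        = Real.exp (-(c*t)) * ((1+t)^b * (1+t)^((d:ℝ)+1)) := by ring
      _ = Real.exp (-(c*t)) * (1+t)^m := by rw [key]
      _ ≤ Real.exp (-(c*t)) * (M * Real.exp (c*t)) := by
          exact mul_le_mul_of_nonneg_left (aux_pow_le_exp m (by omega) hc ht) (Real.exp_nonneg _)
      _ = M := by rw [mul_comm M, ← mul_assoc, ← Real.exp_add]; simp

lemma aux_geom {R t s A : ℝ} (hR : 0 < R) (hs0 : 0 ≤ s) (ht : 0 ≤ t)
    (hA2 : A ^ 2 ≤ t ^ 2) (hAt : A ≤ t) (htR : t ≤ R / 2) (hsRlow : R - t ≤ s)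
    (hsq : s ^ 2 = t ^ 2 - 2 * (R * A) + R ^ 2) :
    R - A ≤ s ∧ s - (R - A) ≤ t ^ 2 / R := by
  have h1 : 0 ≤ R - A := by linarith
  have hfirst : R - A ≤ s := by
    by_contra hcon
    push_neg at hcon
    nlinarith
  refine ⟨hfirst, ?_⟩
  have hsA : A ≤ s := by linarith
  have hkey : (s - (R - A)) * R ≤ t ^ 2 := by nlinarith
  rw [le_div_iff₀ hR]
  exact hkey

lemma aux_bracket {C₀ κ a t P G D : ℝ} (hC₀ : 0 < C₀) (hκ : 0 < κ) (ha : 0 ≤ a) (ht : 0 ≤ t)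
    (hP : 1 ≤ P) (hG1 : 1 ≤ G) (hGt : t ≤ G) (hGt2 : t ^ 2 ≤ G) (had : a ≤ D) (hD : 0 ≤ D) :
    C₀ * P + C₀ + κ * P * (t ^ 2 + a * t) ≤ (4 * C₀ + κ * (D + 4)) * P * G := by
  have hP0 : 0 < P := by linarith
  have hG0 : 0 < G := by linarith
  have h1 : C₀ ≤ C₀ * P := le_mul_of_one_le_right hC₀.le hP
  have h2 : C₀ * P ≤ C₀ * P * G := le_mul_of_one_le_right (by positivity) hG1
  have h3 : κ * P * t ^ 2 ≤ κ * P * G := mul_le_mul_of_nonneg_left hGt2 (by positivity)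
  have h4 : κ * P * (a * t) ≤ κ * P * (D * G) :=
    mul_le_mul_of_nonneg_left (mul_le_mul had hGt ht hD) (by positivity)
  have h5 : 0 ≤ κ * P * G := by positivity
  have h6 : 0 ≤ C₀ * P * G := by positivity
  nlinarith [h1, h2, h3, h4, h5, h6]

lemma core_pointwise (d : ℕ) (hd : 1 ≤ d) (q : ℝ → ℝ) (κ C₀ : ℝ) (hκ : 0 < κ) (hC₀ : 0 < C₀)
    (hqpos : ∀ r : ℝ, 0 ≤ r → 0 ≤ q r)
    (hq1 : ∀ r : ℝ, 0 ≤ r → q r ≤ C₀ * Real.exp (-r))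
    (hq2 : ∀ r : ℝ, 1 ≤ r →
      |q r - κ * r ^ (-((d : ℝ) - 1) / 2) * Real.exp (-r)| ≤
        C₀ * r ^ (-((d : ℝ) + 1) / 2) * Real.exp (-r))
    (z x : EuclideanSpace ℝ (Fin d)) (hz : 2 ≤ ‖z‖) :
    |q ‖x - z‖ - q ‖z‖ * Real.exp ((inner ℝ x z : ℝ) / ‖z‖)| ≤
      ((4*C₀ + κ*((d:ℝ)+4)) * 2^(d+3)) * ‖z‖ ^ (-((d:ℝ)+1)/2) * Real.exp (-‖z‖) *
        (Real.exp ‖x‖ * (1+‖x‖)^(d+3)) := by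
  set R : ℝ := ‖z‖ with hRdef
  set t : ℝ := ‖x‖ with htdef
  set s : ℝ := ‖x - z‖ with hsdef
  set A : ℝ := (inner ℝ x z : ℝ) / R with hAdef
  have hR : (0:ℝ) < R := lt_of_lt_of_le (by norm_num) hz
  have ht : 0 ≤ t := norm_nonneg x
  have hs0 : 0 ≤ s := norm_nonneg _
  set a : ℝ := ((d:ℝ) - 1) / 2 with hadef
  have ha : 0 ≤ a := by
    have : (1:ℝ) ≤ (d:ℝ) := by exact_mod_cast hd
    rw [hadef]; linarith
  have had : a ≤ (d:ℝ) := by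
    have : (0:ℝ) ≤ (d:ℝ) := Nat.cast_nonneg d
    rw [hadef]; linarith
  have ea : -((d : ℝ) - 1) / 2 = -a := by rw [hadef]; ring
  have eb : -((d : ℝ) + 1) / 2 = -(a+1) := by rw [hadef]; ring
  rw [eb]
  -- basic facts
  have hA : |A| ≤ t := by
    rw [hAdef, abs_div, abs_of_pos hR, div_le_iff₀ hR]
    exact abs_real_inner_le_norm x z
  have hAt : A ≤ t := (le_abs_self A).trans hA
  have hexpA : Real.exp A ≤ Real.exp t := Real.exp_le_exp.mpr hAt
  have hsR : R - t ≤ s := by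
    have := norm_sub_norm_le z x
    rw [norm_sub_rev] at this
    simpa [hRdef, htdef, hsdef] using this
  have hsRt : |s - R| ≤ t := by
    have h := abs_norm_sub_norm_le (x - z) (-z)
    simp only [sub_neg_eq_add, sub_add_cancel, norm_neg] at h
    exact h
  -- powers of two
  have h2pow : ∀ c : ℝ, c ≤ (d:ℝ) + 3 → (2:ℝ) ^ c ≤ 2 ^ (d+3) := by
    intro c hc
    calc (2:ℝ) ^ c ≤ (2:ℝ) ^ ((d:ℝ)+3) := Real.rpow_le_rpow_of_exponent_le one_le_two hc
      _ = 2 ^ (d+3) := by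
          rw [← Real.rpow_natCast 2 (d+3)]; congr 1; push_cast; ring
  have h2pos : (0:ℝ) < 2 ^ (d+3) := by positivity
  have hXpos : (0:ℝ) < R ^ (-(a+1)) := Real.rpow_pos_of_pos hR _
  have hGone : (1:ℝ) ≤ (1+t) ^ (d+3) := one_le_pow₀ (by linarith)
  have hGt : t ≤ (1+t) ^ (d+3) := by
    calc t ≤ 1 + t := by linarith
      _ ≤ (1+t) ^ (d+3) := le_self_pow₀ (by linarith) (by omega)
  have hGt2 : t^2 ≤ (1+t) ^ (d+3) := by
    calc t^2 ≤ (1+t)^2 := by nlinarith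
      _ ≤ (1+t) ^ (d+3) := pow_le_pow_right₀ (by linarith) (by omega)
  have hKpos : (0:ℝ) < (4*C₀ + κ*((d:ℝ)+4)) * 2^(d+3) := by positivity
  rcases le_or_gt t (R/2) with hcase | hcase
  · -- inner case : t ≤ R/2
    have hs_half : R/2 ≤ s := by linarith
    have hR1 : (1:ℝ) ≤ R := by linarith
    have hs1 : (1:ℝ) ≤ s := by linarith
    have hq2s := hq2 s hs1
    have hq2R := hq2 R hR1
    rw [ea, eb] at hq2s hq2R
    -- geometry
    have hRA : R - A ≥ R/2 := by linarith
    have hinner : R * A = (inner ℝ x z : ℝ) := by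
      rw [hAdef]; field_simp
    have hsq : s^2 = t^2 - 2*(R*A) + R^2 := by
      rw [hsdef, htdef, hRdef, hinner]
      exact norm_sub_sq_real x z
    have hA2 : A^2 ≤ t^2 := by
      have := sq_abs A
      have := sq_abs t
      nlinarith [pow_le_pow_left₀ (abs_nonneg A) (hA.trans (le_abs_self t)) 2]
    have hgeom := aux_geom hR hs0 ht hA2 hAt hcase hsR hsq
    have hsge : R - A ≤ s := hgeom.1
    have hgap : s - (R - A) ≤ t^2 / R := hgeom.2
    -- exp estimate
    have hXdef : Real.exp (-(R - A)) = Real.exp (-R) * Real.exp A := by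
      rw [← Real.exp_add]; congr 1; ring
    have hexp1 : |Real.exp (-s) - Real.exp (-(R-A))| ≤ Real.exp (-R) * Real.exp A * (t^2/R) := by
      have hle : Real.exp (-s) ≤ Real.exp (-(R-A)) := Real.exp_le_exp.mpr (by linarith)
      rw [abs_of_nonpos (by linarith), neg_sub]
      have hkey : 1 - Real.exp (-(s - (R-A))) ≤ s - (R-A) := by
        have := Real.add_one_le_exp (-(s - (R-A)))
        linarith
      have : Real.exp (-(R-A)) - Real.exp (-s)
          = Real.exp (-(R-A)) * (1 - Real.exp (-(s - (R-A)))) := by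
        rw [mul_sub, mul_one, ← Real.exp_add]; congr 2; ring
      rw [this, hXdef]
      calc Real.exp (-R) * Real.exp A * (1 - Real.exp (-(s - (R-A))))
          ≤ Real.exp (-R) * Real.exp A * (s - (R-A)) := by
            apply mul_le_mul_of_nonneg_left (hkey.trans (le_refl _)) (by positivity)
        _ ≤ Real.exp (-R) * Real.exp A * (t^2/R) := by
            apply mul_le_mul_of_nonneg_left hgap (by positivity)
    -- rpow estimates
    have hhalf : ∀ c : ℝ, (R/2) ^ (-c) = 2^c * R ^ (-c) := by
      intro c
      rw [div_eq_mul_inv, Real.mul_rpow hR.le (by norm_num), Real.inv_rpow (by norm_num),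
        ← Real.rpow_neg (by norm_num), neg_neg, mul_comm]
    have hRaR : R ^ (-a) = R * R^(-(a+1)) := by
      rw [show -a = 1 + (-(a+1)) by ring, Real.rpow_add hR, Real.rpow_one]
    have hsa : s ^ (-a) ≤ 2^(d+3) * (R * R^(-(a+1))) := by
      calc s ^ (-a) ≤ (R/2) ^ (-a) :=
            Real.rpow_le_rpow_of_nonpos (by linarith) hs_half (by linarith)
        _ = 2^a * R^(-a) := hhalf a
        _ ≤ 2^(d+3) * R^(-a) := by
            apply mul_le_mul_of_nonneg_right (h2pow a (by linarith)) (Real.rpow_nonneg hR.le _)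
        _ = 2^(d+3) * (R * R^(-(a+1))) := by rw [hRaR]
    have hsap : s ^ (-(a+1)) ≤ 2^(d+3) * R^(-(a+1)) := by
      calc s ^ (-(a+1)) ≤ (R/2) ^ (-(a+1)) :=
            Real.rpow_le_rpow_of_nonpos (by linarith) hs_half (by linarith)
        _ = 2^(a+1) * R^(-(a+1)) := hhalf (a+1)
        _ ≤ 2^(d+3) * R^(-(a+1)) := by
            apply mul_le_mul_of_nonneg_right (h2pow (a+1) (by linarith)) hXpos.le
    have hmvt : |s ^ (-a) - R ^ (-a)| ≤ a * 2^(d+3) * R^(-(a+1)) * t := by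
      calc |s ^ (-a) - R ^ (-a)| ≤ a * (R/2) ^ (-a-1) * |s - R| :=
            aux_rpow_mvt ha (by linarith : (0:ℝ) < R/2) hs_half (by linarith)
        _ ≤ a * (R/2) ^ (-a-1) * t := by
            apply mul_le_mul_of_nonneg_left hsRt (by positivity)
        _ = a * (2^(a+1) * R^(-(a+1))) * t := by rw [show -a-1 = -(a+1) by ring, hhalf (a+1)]
        _ ≤ a * (2^(d+3) * R^(-(a+1))) * t := by
            apply mul_le_mul_of_nonneg_right _ ht
            apply mul_le_mul_of_nonneg_left _ ha
            apply mul_le_mul_of_nonneg_right (h2pow (a+1) (by linarith)) hXpos.le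
        _ = a * 2^(d+3) * R^(-(a+1)) * t := by ring
    -- decomposition
    have hdecomp : q s - q R * Real.exp A
        = (q s - κ * s^(-a) * Real.exp (-s))
          + κ * (s^(-a) * Real.exp (-s) - R^(-a) * (Real.exp (-R) * Real.exp A))
          + (κ * R^(-a) * Real.exp (-R) - q R) * Real.exp A := by ring
    have hT1 : |q s - κ * s^(-a) * Real.exp (-s)| ≤ C₀ * 2^(d+3) * R^(-(a+1)) * (Real.exp (-R) * Real.exp t) := by
      calc |q s - κ * s^(-a) * Real.exp (-s)| ≤ C₀ * s^(-(a+1)) * Real.exp (-s) := hq2s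
        _ ≤ C₀ * (2^(d+3) * R^(-(a+1))) * (Real.exp (-R) * Real.exp t) := by
            apply mul_le_mul
            · exact mul_le_mul_of_nonneg_left hsap hC₀.le
            · rw [← Real.exp_add]
              apply Real.exp_le_exp.mpr; linarith
            · positivity
            · positivity
        _ = C₀ * 2^(d+3) * R^(-(a+1)) * (Real.exp (-R) * Real.exp t) := by ring
    have hT3 : |(κ * R^(-a) * Real.exp (-R) - q R) * Real.exp A|
        ≤ C₀ * R^(-(a+1)) * (Real.exp (-R) * Real.exp t) := by
      rw [abs_mul, Real.abs_exp]
      have h1 : |κ * R^(-a) * Real.exp (-R) - q R| ≤ C₀ * R^(-(a+1)) * Real.exp (-R) := by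
        rw [abs_sub_comm]; exact hq2R
      calc |κ * R^(-a) * Real.exp (-R) - q R| * Real.exp A
          ≤ (C₀ * R^(-(a+1)) * Real.exp (-R)) * Real.exp t := by
            apply mul_le_mul h1 hexpA (Real.exp_nonneg _) (by positivity)
        _ = C₀ * R^(-(a+1)) * (Real.exp (-R) * Real.exp t) := by ring
    have hT2 : |κ * (s^(-a) * Real.exp (-s) - R^(-a) * (Real.exp (-R) * Real.exp A))|
        ≤ κ * 2^(d+3) * R^(-(a+1)) * (Real.exp (-R) * Real.exp t) * (t^2 + a * t) := by
      rw [abs_mul, abs_of_pos hκ]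
      have hsplit : s^(-a) * Real.exp (-s) - R^(-a) * (Real.exp (-R) * Real.exp A)
          = s^(-a) * (Real.exp (-s) - Real.exp (-(R-A)))
            + (s^(-a) - R^(-a)) * (Real.exp (-R) * Real.exp A) := by
        rw [hXdef]; ring
      rw [hsplit]
      have e1 : |s^(-a) * (Real.exp (-s) - Real.exp (-(R-A)))|
          ≤ (2^(d+3) * (R * R^(-(a+1)))) * (Real.exp (-R) * Real.exp A * (t^2/R)) := by
        rw [abs_mul, abs_of_nonneg (Real.rpow_nonneg hs0 _)]
        exact mul_le_mul hsa hexp1 (abs_nonneg _) (by positivity)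
      have e2 : |(s^(-a) - R^(-a)) * (Real.exp (-R) * Real.exp A)|
          ≤ (a * 2^(d+3) * R^(-(a+1)) * t) * (Real.exp (-R) * Real.exp t) := by
        rw [abs_mul, abs_of_nonneg (by positivity : (0:ℝ) ≤ Real.exp (-R) * Real.exp A)]
        apply mul_le_mul hmvt _ (by positivity) (by positivity)
        exact mul_le_mul_of_nonneg_left hexpA (Real.exp_nonneg _)
      have e3 : (2^(d+3) * (R * R^(-(a+1)))) * (Real.exp (-R) * Real.exp A * (t^2/R))
          = 2^(d+3) * R^(-(a+1)) * (Real.exp (-R) * Real.exp A) * t^2 := by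
        field_simp
      calc κ * |s^(-a) * (Real.exp (-s) - Real.exp (-(R-A)))
            + (s^(-a) - R^(-a)) * (Real.exp (-R) * Real.exp A)|
          ≤ κ * (|s^(-a) * (Real.exp (-s) - Real.exp (-(R-A)))|
            + |(s^(-a) - R^(-a)) * (Real.exp (-R) * Real.exp A)|) := by
            apply mul_le_mul_of_nonneg_left (abs_add_le _ _) hκ.le
        _ ≤ κ * ((2^(d+3) * R^(-(a+1)) * (Real.exp (-R) * Real.exp A) * t^2)
            + (a * 2^(d+3) * R^(-(a+1)) * t) * (Real.exp (-R) * Real.exp t)) := by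
            apply mul_le_mul_of_nonneg_left _ hκ.le
            rw [← e3]
            exact add_le_add e1 e2
        _ ≤ κ * ((2^(d+3) * R^(-(a+1)) * (Real.exp (-R) * Real.exp t) * t^2)
            + (a * 2^(d+3) * R^(-(a+1)) * t) * (Real.exp (-R) * Real.exp t)) := by
            apply mul_le_mul_of_nonneg_left _ hκ.le
            apply add_le_add_left
            apply mul_le_mul_of_nonneg_right _ (sq_nonneg t)
            apply mul_le_mul_of_nonneg_left _ (by positivity)
            exact mul_le_mul_of_nonneg_left hexpA (Real.exp_nonneg _)
        _ = κ * 2^(d+3) * R^(-(a+1)) * (Real.exp (-R) * Real.exp t) * (t^2 + a * t) := by ring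
    -- combine
    have hsum : |q s - q R * Real.exp A|
        ≤ (C₀ * 2^(d+3) + C₀ + κ * 2^(d+3) * (t^2 + a*t)) * (R^(-(a+1)) * (Real.exp (-R) * Real.exp t)) := by
      rw [hdecomp]
      calc |(q s - κ * s^(-a) * Real.exp (-s))
            + κ * (s^(-a) * Real.exp (-s) - R^(-a) * (Real.exp (-R) * Real.exp A))
            + (κ * R^(-a) * Real.exp (-R) - q R) * Real.exp A|
          ≤ |q s - κ * s^(-a) * Real.exp (-s)|
            + |κ * (s^(-a) * Real.exp (-s) - R^(-a) * (Real.exp (-R) * Real.exp A))|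
            + |(κ * R^(-a) * Real.exp (-R) - q R) * Real.exp A| := abs_add_three _ _ _
        _ ≤ C₀ * 2^(d+3) * R^(-(a+1)) * (Real.exp (-R) * Real.exp t)
            + κ * 2^(d+3) * R^(-(a+1)) * (Real.exp (-R) * Real.exp t) * (t^2 + a * t)
            + C₀ * R^(-(a+1)) * (Real.exp (-R) * Real.exp t) := add_le_add (add_le_add hT1 hT2) hT3
        _ = (C₀ * 2^(d+3) + C₀ + κ * 2^(d+3) * (t^2 + a*t)) * (R^(-(a+1)) * (Real.exp (-R) * Real.exp t)) := by ring
    have hbracket : C₀ * 2^(d+3) + C₀ + κ * 2^(d+3) * (t^2 + a*t)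
        ≤ (4*C₀ + κ*((d:ℝ)+4)) * 2^(d+3) * (1+t)^(d+3) := by
      exact aux_bracket hC₀ hκ ha ht (one_le_pow₀ (by norm_num)) hGone hGt hGt2 had (Nat.cast_nonneg d)
    calc |q s - q R * Real.exp A|
        ≤ (C₀ * 2^(d+3) + C₀ + κ * 2^(d+3) * (t^2 + a*t)) * (R^(-(a+1)) * (Real.exp (-R) * Real.exp t)) := hsum
      _ ≤ ((4*C₀ + κ*((d:ℝ)+4)) * 2^(d+3) * (1+t)^(d+3)) * (R^(-(a+1)) * (Real.exp (-R) * Real.exp t)) := by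
          apply mul_le_mul_of_nonneg_right hbracket (by positivity)
      _ = (4*C₀ + κ*((d:ℝ)+4)) * 2^(d+3) * R^(-(a+1)) * Real.exp (-R) * (Real.exp t * (1+t)^(d+3)) := by ring
  · -- outer case : R/2 < t
    have hqs : q s ≤ C₀ * (Real.exp (-R) * Real.exp t) := by
      calc q s ≤ C₀ * Real.exp (-s) := hq1 s hs0
        _ ≤ C₀ * (Real.exp (-R) * Real.exp t) := by
            rw [← Real.exp_add]
            apply mul_le_mul_of_nonneg_left _ hC₀.le
            apply Real.exp_le_exp.mpr; linarith
    have hqR : q R * Real.exp A ≤ C₀ * (Real.exp (-R) * Real.exp t) := by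
      calc q R * Real.exp A ≤ (C₀ * Real.exp (-R)) * Real.exp t := by
            apply mul_le_mul (hq1 R hR.le) hexpA (Real.exp_nonneg _) (by positivity)
        _ = C₀ * (Real.exp (-R) * Real.exp t) := by ring
    have habs : |q s - q R * Real.exp A| ≤ 2 * C₀ * (Real.exp (-R) * Real.exp t) := by
      have hE : (0:ℝ) ≤ Real.exp (-R) * Real.exp t := by positivity
      have h1 : 0 ≤ q s := hqpos s hs0
      have h2 : 0 ≤ q R * Real.exp A := mul_nonneg (hqpos R hR.le) (Real.exp_nonneg _)
      rw [abs_le]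
      constructor <;> [linarith; linarith]
    -- 1 ≤ 2^(d+3) * R^(-(a+1)) * (1+t)^(d+3)
    have hone : (1:ℝ) ≤ 2^(d+3) * R^(-(a+1)) * (1+t)^(d+3) := by
      have hRle : R ≤ 2*(1+t) := by linarith
      have hpow : R^(a+1) ≤ 2^(d+3) * (1+t)^(d+3) := by
        calc R^(a+1) ≤ (2*(1+t))^(a+1) :=
              Real.rpow_le_rpow hR.le hRle (by linarith)
          _ = 2^(a+1) * (1+t)^(a+1) := Real.mul_rpow (by norm_num) (by linarith)
          _ ≤ 2^(d+3) * (1+t)^(d+3) := by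
              apply mul_le_mul (h2pow (a+1) (by linarith)) _ (Real.rpow_nonneg (by linarith) _) h2pos.le
              calc (1+t)^(a+1) ≤ (1+t)^((d:ℝ)+3) :=
                    Real.rpow_le_rpow_of_exponent_le (by linarith) (by linarith)
                _ = (1+t)^(d+3) := by
                    rw [← Real.rpow_natCast (1+t) (d+3)]; congr 1; push_cast; ring
      have hRR : R^(a+1) * R^(-(a+1)) = 1 := by
        have he : a + 1 + -(a+1) = 0 := by ring
        rw [← Real.rpow_add hR, he, Real.rpow_zero]
      calc (1:ℝ) = R^(a+1) * R^(-(a+1)) := hRR.symm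
        _ ≤ (2^(d+3) * (1+t)^(d+3)) * R^(-(a+1)) :=
            mul_le_mul_of_nonneg_right hpow hXpos.le
        _ = 2^(d+3) * R^(-(a+1)) * (1+t)^(d+3) := by ring
    have hfinal : 2 * C₀ * (Real.exp (-R) * Real.exp t)
        ≤ (2 * C₀ * 2^(d+3)) * (R^(-(a+1)) * Real.exp (-R) * (Real.exp t * (1+t)^(d+3))) := by
      calc 2 * C₀ * (Real.exp (-R) * Real.exp t)
          = 2 * C₀ * (Real.exp (-R) * Real.exp t) * 1 := by ring
        _ ≤ 2 * C₀ * (Real.exp (-R) * Real.exp t) * (2^(d+3) * R^(-(a+1)) * (1+t)^(d+3)) := by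
            apply mul_le_mul_of_nonneg_left hone (by positivity)
        _ = (2 * C₀ * 2^(d+3)) * (R^(-(a+1)) * Real.exp (-R) * (Real.exp t * (1+t)^(d+3))) := by ring
    calc |q s - q R * Real.exp A| ≤ 2 * C₀ * (Real.exp (-R) * Real.exp t) := habs
      _ ≤ (2 * C₀ * 2^(d+3)) * (R^(-(a+1)) * Real.exp (-R) * (Real.exp t * (1+t)^(d+3))) := hfinal
      _ ≤ ((4*C₀ + κ*((d:ℝ)+4)) * 2^(d+3)) * (R^(-(a+1)) * Real.exp (-R) * (Real.exp t * (1+t)^(d+3))) := by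
          apply mul_le_mul_of_nonneg_right _ (by positivity)
          apply mul_le_mul_of_nonneg_right _ h2pos.le
          have hkd : (0:ℝ) ≤ κ*((d:ℝ)+4) := by positivity
          linarith
      _ = ((4*C₀ + κ*((d:ℝ)+4)) * 2^(d+3)) * R^(-(a+1)) * Real.exp (-R) * (Real.exp t * (1+t)^(d+3)) := by ring

lemma aux_lower (d : ℕ) (hd : 1 ≤ d) (q : ℝ → ℝ) (κ C₀ : ℝ) (hκ : 0 < κ)
    (hqpos : ∀ r : ℝ, 0 ≤ r → 0 < q r)
    (hqcont : ContinuousOn q (Set.Ici (0:ℝ)))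
    (hq2 : ∀ r : ℝ, 1 ≤ r →
      |q r - κ * r ^ (-((d : ℝ) - 1) / 2) * Real.exp (-r)| ≤
        C₀ * r ^ (-((d : ℝ) + 1) / 2) * Real.exp (-r)) :
    ∃ c₂ > 0, ∀ R : ℝ, 2 ≤ R → c₂ * (R ^ (-((d:ℝ)-1)/2) * Real.exp (-R)) ≤ q R := by
  set a : ℝ := ((d:ℝ) - 1) / 2 with hadef
  set R₀ : ℝ := max 2 (2*C₀/κ) with hR₀def
  have hR₀2 : (2:ℝ) ≤ R₀ := le_max_left _ _
  -- min of q on the compact interval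
  have hcomp : IsCompact (Set.Icc (2:ℝ) R₀) := isCompact_Icc
  have hne : (Set.Icc (2:ℝ) R₀).Nonempty := ⟨2, le_refl _, hR₀2⟩
  have hsub : Set.Icc (2:ℝ) R₀ ⊆ Set.Ici 0 := fun r hr => le_trans (by norm_num) hr.1
  obtain ⟨r₀, hr₀mem, hr₀min⟩ := hcomp.exists_isMinOn hne (hqcont.mono hsub)
  set μ : ℝ := q r₀ with hμdef
  have hμ : 0 < μ := hqpos r₀ (hsub hr₀mem)
  refine ⟨min (κ/2) μ, by positivity, ?_⟩
  intro R hR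
  have hR0 : (0:ℝ) < R := by linarith
  have hR1 : (1:ℝ) ≤ R := by linarith
  have hq2R := hq2 R hR1
  have ea : -((d : ℝ) - 1) / 2 = -a := by rw [hadef]; ring
  have eb : -((d : ℝ) + 1) / 2 = -(a+1) := by rw [hadef]; ring
  rw [ea, eb] at hq2R
  rw [ea]
  have habs := (abs_le.mp hq2R).2
  have hlow : κ * R^(-a) * Real.exp (-R) - C₀ * R^(-(a+1)) * Real.exp (-R) ≤ q R := by
    have := (abs_le.mp hq2R).1
    linarith
  have hXa : (0:ℝ) < R ^ (-a) := Real.rpow_pos_of_pos hR0 _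
  have hfact : R^(-(a+1)) = R^(-a) / R := by
    rw [show -(a+1) = -a + (-1) by ring, Real.rpow_add hR0, Real.rpow_neg_one]
    ring
  rcases le_or_gt R₀ R with hbig | hsmall
  · -- large R : q R ≥ (κ/2) R^(-a) e^{-R}
    have hCR : C₀ / R ≤ κ / 2 := by
      have h2C : 2*C₀/κ ≤ R := le_trans (le_max_right _ _) hbig
      rw [div_le_iff₀ hR0]
      calc C₀ = κ * (2*C₀/κ) / 2 := by field_simp
        _ ≤ κ * R / 2 := by
            apply div_le_div_of_nonneg_right _ (by norm_num)
            exact mul_le_mul_of_nonneg_left h2C hκ.le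
        _ = κ / 2 * R := by ring
    have hsubtr : C₀ * R^(-(a+1)) * Real.exp (-R) ≤ (κ/2) * R^(-a) * Real.exp (-R) := by
      rw [hfact]
      have h1 : C₀ * (R^(-a)/R) = (C₀/R) * R^(-a) := by ring
      rw [h1]
      apply mul_le_mul_of_nonneg_right _ (Real.exp_nonneg _)
      exact mul_le_mul_of_nonneg_right hCR hXa.le
    calc min (κ/2) μ * (R^(-a) * Real.exp (-R)) ≤ (κ/2) * (R^(-a) * Real.exp (-R)) := by
          apply mul_le_mul_of_nonneg_right (min_le_left _ _) (by positivity)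
      _ ≤ q R := by nlinarith [hlow, hsubtr]
  · -- small R : use the minimum μ
    have hmem : R ∈ Set.Icc (2:ℝ) R₀ := ⟨hR, hsmall.le⟩
    have hqR : μ ≤ q R := hr₀min hmem
    have ha : 0 ≤ a := by
      have : (1:ℝ) ≤ (d:ℝ) := by exact_mod_cast hd
      rw [hadef]; linarith
    have h1 : R^(-a) ≤ 1 := Real.rpow_le_one_of_one_le_of_nonpos hR1 (by linarith)
    have h2 : Real.exp (-R) ≤ 1 := by
      rw [← Real.exp_zero]
      exact Real.exp_le_exp.mpr (by linarith)
    have hXle : R^(-a) * Real.exp (-R) ≤ 1 :=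
      mul_le_one₀ h1 (Real.exp_nonneg _) h2
    calc min (κ/2) μ * (R^(-a) * Real.exp (-R)) ≤ μ * (R^(-a) * Real.exp (-R)) := by
          apply mul_le_mul_of_nonneg_right (min_le_right _ _) (by positivity)
      _ ≤ μ * 1 := mul_le_mul_of_nonneg_left hXle hμ.le
      _ = μ := mul_one μ
      _ ≤ q R := hqR

/-- **Asymptotics of the leading soliton interaction.** Let `Q(x) = q(|x|) > 0` be continuous
and radial with `q(r) ≤ C₀e^{−r}` and `|q(r) − κ r^{−(d−1)/2}e^{−r}| ≤ C₀ r^{−(d+1)/2}e^{−r}`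
for `r ≥ 1`. Then there is `C > 0` such that for `|z| ≥ 2`,
`|∫ Q^p Q(·−z) − I q(|z|)| ≤ C |z|⁻¹ q(|z|)` with `I = ∫ Q(x)^p e^{−x₁} dx`. -/
theorem soliton_interaction_asymptotics (d : ℕ) (hd : 1 ≤ d) (p : ℝ) (hp : 1 < p)
    (Q : EuclideanSpace ℝ (Fin d) → ℝ) (q : ℝ → ℝ) (κ C₀ : ℝ)
    (hκ : 0 < κ) (hC₀ : 0 < C₀)
    (hQpos : ∀ x, 0 < Q x) (hQcont : Continuous Q)
    (hQrad : ∀ x, Q x = q ‖x‖)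
    (hq1 : ∀ r : ℝ, 0 ≤ r → q r ≤ C₀ * Real.exp (-r))
    (hq2 : ∀ r : ℝ, 1 ≤ r →
      |q r - κ * r ^ (-((d : ℝ) - 1) / 2) * Real.exp (-r)| ≤
        C₀ * r ^ (-((d : ℝ) + 1) / 2) * Real.exp (-r)) :
    ∃ C > 0, ∀ z : EuclideanSpace ℝ (Fin d), 2 ≤ ‖z‖ →
      |(∫ x, Q x ^ p * Q (x - z)) -
          (∫ x : EuclideanSpace ℝ (Fin d), Q x ^ p * Real.exp (-(x ⟨0, hd⟩))) * q ‖z‖| ≤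
        C * ‖z‖⁻¹ * q ‖z‖ := by
  have hp0 : (0:ℝ) < p := by linarith
  have hp1 : (0:ℝ) < p - 1 := by linarith
  set n : ℕ := d + 3 with hndef
  set u : EuclideanSpace ℝ (Fin d) := EuclideanSpace.single ⟨0, hd⟩ (1:ℝ) with hudef
  have hu : ‖u‖ = 1 := by simp [hudef, EuclideanSpace.norm_single]
  have hqq : ∀ r : ℝ, 0 ≤ r → q r = Q (r • u) := by
    intro r hr
    rw [hQrad, norm_smul, hu, mul_one, Real.norm_eq_abs, abs_of_nonneg hr]
  have hqpos : ∀ r : ℝ, 0 ≤ r → 0 < q r := fun r hr => (hqq r hr) ▸ hQpos _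
  have hqcont : ContinuousOn q (Set.Ici (0:ℝ)) := by
    have hc : Continuous fun r : ℝ => Q (r • u) :=
      hQcont.comp (continuous_id.smul continuous_const)
    exact hc.continuousOn.congr fun r hr => hqq r hr
  obtain ⟨c₂, hc₂, hlow⟩ := aux_lower d hd q κ C₀ hκ hqpos hqcont hq2
  have hQnn : ∀ x, 0 ≤ Q x := fun x => (hQpos x).le
  have hQb : ∀ x : EuclideanSpace ℝ (Fin d), Q x ^ p ≤ C₀^p * Real.exp (-(p * ‖x‖)) := by
    intro x
    have h1 : Q x ≤ C₀ * Real.exp (-‖x‖) := by rw [hQrad]; exact hq1 _ (norm_nonneg x)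
    calc Q x ^ p ≤ (C₀ * Real.exp (-‖x‖)) ^ p := Real.rpow_le_rpow (hQnn x) h1 hp0.le
      _ = C₀^p * (Real.exp (-‖x‖))^p := Real.mul_rpow hC₀.le (Real.exp_nonneg _)
      _ = C₀^p * Real.exp (-(p * ‖x‖)) := by
          rw [← Real.exp_mul]; congr 1; ring
  have hQpcont : Continuous fun x : EuclideanSpace ℝ (Fin d) => Q x ^ p :=
    hQcont.rpow_const fun x => Or.inl (hQpos x).ne'
  set g : EuclideanSpace ℝ (Fin d) → ℝ :=
    fun x => C₀^p * (Real.exp (-((p-1) * ‖x‖)) * (1+‖x‖)^n) with hgdef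
  have hg_int : Integrable g := (aux_integrable d hp1 n).const_mul _
  have hg_nn : ∀ x, 0 ≤ g x := fun x => by rw [hgdef]; positivity
  have hg_maj : ∀ x, Q x ^ p * (Real.exp ‖x‖ * (1+‖x‖)^n) ≤ g x := by
    intro x
    have ht : (0:ℝ) ≤ ‖x‖ := norm_nonneg x
    have h1 : Q x ^ p * Real.exp ‖x‖ ≤ C₀^p * Real.exp (-((p-1) * ‖x‖)) := by
      calc Q x ^ p * Real.exp ‖x‖ ≤ (C₀^p * Real.exp (-(p*‖x‖))) * Real.exp ‖x‖ :=
            mul_le_mul_of_nonneg_right (hQb x) (Real.exp_nonneg _)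
        _ = C₀^p * Real.exp (-((p-1) * ‖x‖)) := by
            rw [mul_assoc, ← Real.exp_add]; congr 2; ring
    calc Q x ^ p * (Real.exp ‖x‖ * (1+‖x‖)^n)
        = (Q x ^ p * Real.exp ‖x‖) * (1+‖x‖)^n := by ring
      _ ≤ (C₀^p * Real.exp (-((p-1)*‖x‖))) * (1+‖x‖)^n :=
          mul_le_mul_of_nonneg_right h1 (by positivity)
      _ = g x := by rw [hgdef]; ring
  have hw_cont : Continuous fun x : EuclideanSpace ℝ (Fin d) =>
      Q x ^ p * (Real.exp ‖x‖ * (1+‖x‖)^n) :=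
    hQpcont.mul ((Real.continuous_exp.comp continuous_norm).mul
      ((continuous_const.add continuous_norm).pow n))
  have hw_nn : ∀ x : EuclideanSpace ℝ (Fin d),
      0 ≤ Q x ^ p * (Real.exp ‖x‖ * (1+‖x‖)^n) := fun x =>
    mul_nonneg (Real.rpow_nonneg (hQnn x) p) (by positivity)
  have hJ_int : Integrable (fun x : EuclideanSpace ℝ (Fin d) =>
      Q x ^ p * (Real.exp ‖x‖ * (1+‖x‖)^n)) := by
    refine hg_int.mono' hw_cont.aestronglyMeasurable ?_
    filter_upwards with x
    rw [Real.norm_eq_abs, abs_of_nonneg (hw_nn x)]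
    exact hg_maj x
  set J : ℝ := ∫ x : EuclideanSpace ℝ (Fin d), Q x ^ p * (Real.exp ‖x‖ * (1+‖x‖)^n)
    with hJdef
  have hJ0 : 0 ≤ J := integral_nonneg hw_nn
  set K : ℝ := (4*C₀ + κ*((d:ℝ)+4)) * 2^(d+3) with hKdef
  have hK : 0 < K := by positivity
  have hCpos : 0 < K * J / c₂ + 1 := by
    have h1 : 0 ≤ K * J / c₂ := div_nonneg (mul_nonneg hK.le hJ0) hc₂.le
    linarith
  refine ⟨K * J / c₂ + 1, hCpos, ?_⟩
  intro z hz
  set R := ‖z‖ with hRdef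
  have hR0 : (0:ℝ) < R := lt_of_lt_of_le two_pos hz
  -- coordinate bound
  have hcoord : ∀ x : EuclideanSpace ℝ (Fin d), |x ⟨0,hd⟩| ≤ ‖x‖ := by
    intro x
    have h1 : (inner ℝ x u : ℝ) = x ⟨0,hd⟩ := by
      simp [hudef, EuclideanSpace.inner_single_right]
    have h2 := abs_real_inner_le_norm x u
    rw [hu, mul_one] at h2
    rw [← h1]; exact h2
  have hinnle : ∀ x : EuclideanSpace ℝ (Fin d), (inner ℝ x z : ℝ) / R ≤ ‖x‖ := by
    intro x
    rw [div_le_iff₀ hR0]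
    exact le_trans (le_abs_self _) (abs_real_inner_le_norm x z)
  -- rotation identity
  have hIeq : (∫ x : EuclideanSpace ℝ (Fin d), Q x ^ p * Real.exp (-(x ⟨0, hd⟩)))
      = ∫ x : EuclideanSpace ℝ (Fin d), Q x ^ p * Real.exp ((inner ℝ x z : ℝ) / R) := by
    set e' : EuclideanSpace ℝ (Fin d) := R⁻¹ • z with he'def
    have he' : ‖e'‖ = 1 := by
      rw [he'def, norm_smul, norm_inv, Real.norm_eq_abs, abs_of_pos hR0, ← hRdef,
        inv_mul_cancel₀ hR0.ne']
    set T := Submodule.reflection (ℝ ∙ (e' - (-u)))ᗮ with hTdef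
    have hTe : T e' = -u := Submodule.reflection_sub (by rw [he', norm_neg, hu])
    have hchg := T.measurePreserving.integral_comp T.toHomeomorph.measurableEmbedding
      (fun x => Q x ^ p * Real.exp ((inner ℝ x z : ℝ) / R))
    rw [← hchg]
    congr 1
    funext y
    have h1 : Q (T y) = Q y := by rw [hQrad, hQrad, T.norm_map]
    have hz' : z = R • e' := by
      rw [he'def, smul_smul, mul_inv_cancel₀ hR0.ne', one_smul]
    have h2 : (inner ℝ (T y) z : ℝ) / R = -(y ⟨0,hd⟩) := by
      rw [hz', real_inner_smul_right, mul_div_cancel_left₀ _ hR0.ne']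
      have h3 : (inner ℝ (T y) e' : ℝ) = inner ℝ y (T e') := by
        conv_lhs => rw [show e' = T (T e') from (Submodule.reflection_reflection _ e').symm]
        exact T.inner_map_map y (T e')
      rw [h3, hTe, inner_neg_right]
      congr 1
      simp [hudef, EuclideanSpace.inner_single_right]
    rw [h1, h2]
  -- integrability for this z
  have hf1_cont : Continuous fun x : EuclideanSpace ℝ (Fin d) => Q x ^ p * Q (x - z) :=
    hQpcont.mul (hQcont.comp (continuous_id.sub continuous_const))
  have hf1_int : Integrable (fun x : EuclideanSpace ℝ (Fin d) => Q x ^ p * Q (x - z)) := by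
    refine (hg_int.const_mul C₀).mono' hf1_cont.aestronglyMeasurable ?_
    filter_upwards with x
    have h1 : 0 ≤ Q x ^ p * Q (x - z) :=
      mul_nonneg (Real.rpow_nonneg (hQnn x) p) (hQnn _)
    rw [Real.norm_eq_abs, abs_of_nonneg h1]
    have h2 : Q (x - z) ≤ C₀ := by
      rw [hQrad]
      calc q ‖x - z‖ ≤ C₀ * Real.exp (-‖x - z‖) := hq1 _ (norm_nonneg _)
        _ ≤ C₀ * 1 := by
            apply mul_le_mul_of_nonneg_left _ hC₀.le
            rw [← Real.exp_zero]
            exact Real.exp_le_exp.mpr (by simpa using norm_nonneg (x - z))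
        _ = C₀ := mul_one C₀
    have h3 : Q x ^ p * Q (x - z) ≤ C₀ * Q x ^ p :=
      by nlinarith [Real.rpow_nonneg (hQnn x) p, hQnn (x - z)]
    have h4 : Q x ^ p ≤ Q x ^ p * (Real.exp ‖x‖ * (1+‖x‖)^n) := by
      apply le_mul_of_one_le_right (Real.rpow_nonneg (hQnn x) p)
      have h5 : (1:ℝ) ≤ Real.exp ‖x‖ := Real.one_le_exp (norm_nonneg x)
      have h6 : (1:ℝ) ≤ (1+‖x‖)^n := one_le_pow₀ (by linarith [norm_nonneg x])
      nlinarith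
    calc Q x ^ p * Q (x - z) ≤ C₀ * Q x ^ p := h3
      _ ≤ C₀ * (Q x ^ p * (Real.exp ‖x‖ * (1+‖x‖)^n)) :=
          mul_le_mul_of_nonneg_left h4 hC₀.le
      _ ≤ C₀ * g x := mul_le_mul_of_nonneg_left (hg_maj x) hC₀.le
  have hf2_cont : Continuous fun x : EuclideanSpace ℝ (Fin d) =>
      Q x ^ p * Real.exp ((inner ℝ x z : ℝ) / R) :=
    hQpcont.mul (Real.continuous_exp.comp
      ((continuous_id.inner continuous_const).div_const R))
  have hf2_int : Integrable (fun x : EuclideanSpace ℝ (Fin d) =>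
      Q x ^ p * Real.exp ((inner ℝ x z : ℝ) / R)) := by
    refine hg_int.mono' hf2_cont.aestronglyMeasurable ?_
    filter_upwards with x
    have h1 : 0 ≤ Q x ^ p * Real.exp ((inner ℝ x z : ℝ) / R) :=
      mul_nonneg (Real.rpow_nonneg (hQnn x) p) (Real.exp_nonneg _)
    rw [Real.norm_eq_abs, abs_of_nonneg h1]
    have h2 : Real.exp ((inner ℝ x z : ℝ) / R) ≤ Real.exp ‖x‖ * (1+‖x‖)^n := by
      calc Real.exp ((inner ℝ x z : ℝ) / R) ≤ Real.exp ‖x‖ :=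
            Real.exp_le_exp.mpr (hinnle x)
        _ ≤ Real.exp ‖x‖ * (1+‖x‖)^n :=
            le_mul_of_one_le_right (Real.exp_nonneg _)
              (one_le_pow₀ (by linarith [norm_nonneg x]))
    calc Q x ^ p * Real.exp ((inner ℝ x z : ℝ) / R)
        ≤ Q x ^ p * (Real.exp ‖x‖ * (1+‖x‖)^n) :=
          mul_le_mul_of_nonneg_left h2 (Real.rpow_nonneg (hQnn x) p)
      _ ≤ g x := hg_maj x
  -- pointwise estimate
  have hpoint : ∀ x : EuclideanSpace ℝ (Fin d),
      |Q x ^ p * Q (x - z) - q R * (Q x ^ p * Real.exp ((inner ℝ x z : ℝ) / R))| ≤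
        (K * R ^ (-((d:ℝ)+1)/2) * Real.exp (-R)) *
          (Q x ^ p * (Real.exp ‖x‖ * (1+‖x‖)^n)) := by
    intro x
    have hcp := core_pointwise d hd q κ C₀ hκ hC₀ (fun r hr => (hqpos r hr).le) hq1 hq2 z x hz
    have hid : Q x ^ p * Q (x - z) - q R * (Q x ^ p * Real.exp ((inner ℝ x z : ℝ) / R))
        = Q x ^ p * (q ‖x - z‖ - q R * Real.exp ((inner ℝ x z : ℝ) / R)) := by
      rw [hQrad (x - z)]; ring
    rw [hid, abs_mul, abs_of_nonneg (Real.rpow_nonneg (hQnn x) p)]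
    calc Q x ^ p * |q ‖x - z‖ - q R * Real.exp ((inner ℝ x z : ℝ) / R)|
        ≤ Q x ^ p * (K * R ^ (-((d:ℝ)+1)/2) * Real.exp (-R) *
            (Real.exp ‖x‖ * (1+‖x‖)^n)) :=
          mul_le_mul_of_nonneg_left hcp (Real.rpow_nonneg (hQnn x) p)
      _ = (K * R ^ (-((d:ℝ)+1)/2) * Real.exp (-R)) *
            (Q x ^ p * (Real.exp ‖x‖ * (1+‖x‖)^n)) := by ring
  -- main estimate
  have hmain : |(∫ x, Q x ^ p * Q (x - z)) -
      (∫ x : EuclideanSpace ℝ (Fin d), Q x ^ p * Real.exp (-(x ⟨0, hd⟩))) * q R| ≤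
      K * R ^ (-((d:ℝ)+1)/2) * Real.exp (-R) * J := by
    rw [hIeq]
    have hsw : (∫ x : EuclideanSpace ℝ (Fin d),
        Q x ^ p * Real.exp ((inner ℝ x z : ℝ) / R)) * q R
        = ∫ x : EuclideanSpace ℝ (Fin d),
            q R * (Q x ^ p * Real.exp ((inner ℝ x z : ℝ) / R)) := by
      rw [integral_const_mul, mul_comm]
    rw [hsw, ← integral_sub hf1_int (hf2_int.const_mul (q R))]
    calc |∫ x : EuclideanSpace ℝ (Fin d),
          (Q x ^ p * Q (x - z) - q R * (Q x ^ p * Real.exp ((inner ℝ x z : ℝ) / R)))|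
        ≤ ∫ x : EuclideanSpace ℝ (Fin d),
            |Q x ^ p * Q (x - z) - q R * (Q x ^ p * Real.exp ((inner ℝ x z : ℝ) / R))| := by
          have := norm_integral_le_integral_norm (μ := volume)
            (f := fun x : EuclideanSpace ℝ (Fin d) =>
              Q x ^ p * Q (x - z) - q R * (Q x ^ p * Real.exp ((inner ℝ x z : ℝ) / R)))
          simpa [Real.norm_eq_abs] using this
      _ ≤ ∫ x : EuclideanSpace ℝ (Fin d),
            (K * R ^ (-((d:ℝ)+1)/2) * Real.exp (-R)) *
              (Q x ^ p * (Real.exp ‖x‖ * (1+‖x‖)^n)) := by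
          apply integral_mono ((hf1_int.sub (hf2_int.const_mul (q R))).abs)
            (hJ_int.const_mul _)
          intro x
          exact hpoint x
      _ = K * R ^ (-((d:ℝ)+1)/2) * Real.exp (-R) * J := by
          rw [integral_const_mul]
  -- final comparison
  have hsplit : R ^ (-((d:ℝ)+1)/2) = R⁻¹ * R ^ (-((d:ℝ)-1)/2) := by
    rw [show -((d:ℝ)+1)/2 = (-1) + (-((d:ℝ)-1)/2) by ring, Real.rpow_add hR0,
      Real.rpow_neg_one]
  have hlowR := hlow R hz
  have hfin : K * R ^ (-((d:ℝ)+1)/2) * Real.exp (-R) * J ≤ (K*J/c₂ + 1) * R⁻¹ * q R := by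
    have hnn1 : 0 ≤ (K*J/c₂) * R⁻¹ :=
      mul_nonneg (div_nonneg (mul_nonneg hK.le hJ0) hc₂.le) (inv_nonneg.mpr hR0.le)
    calc K * R ^ (-((d:ℝ)+1)/2) * Real.exp (-R) * J
        = (K*J) * R⁻¹ * (R ^ (-((d:ℝ)-1)/2) * Real.exp (-R)) := by rw [hsplit]; ring
      _ = (K*J/c₂) * R⁻¹ * (c₂ * (R ^ (-((d:ℝ)-1)/2) * Real.exp (-R))) := by
          field_simp
      _ ≤ (K*J/c₂) * R⁻¹ * q R := mul_le_mul_of_nonneg_left hlowR hnn1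
      _ ≤ (K*J/c₂ + 1) * R⁻¹ * q R := by
          apply mul_le_mul_of_nonneg_right _ (hqpos R (by linarith)).le
          apply mul_le_mul_of_nonneg_right _ (inv_nonneg.mpr hR0.le)
          linarith
  exact hmain.trans hfin
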